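/- Let E = EuclideanSpace ℝ (Fin n) with standard orthonormal basis (b i), and let X : E → E be a continuously differentiable vector field such that the function x ↦ ‖X x‖ is integrable on E with respect to the Lebesgue (volume) measure and such that div X (x) := ∑ i ⟪fderiv ℝ X x (b i), b i⟫ ≤ 0 for every x. Then div X (x) = 0 for every x ∈ E. -/

import Mathlib

open RealInnerProductSpace MeasureTheory

open Set Filter ENNReal

variable {m : ℕ}

-- the divergence in Pi coordinates
noncomputable def pdiv (Y : (Fin (m+1) → ℝ) → (Fin (m+1) → ℝ)) (z : Fin (m+1) → ℝ) : ℝ :=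
  ∑ i, fderiv ℝ Y z (Pi.single i 1) i

lemma pdiv_cont {Y : (Fin (m+1) → ℝ) → (Fin (m+1) → ℝ)} (hY : ContDiff ℝ 1 Y) :
    Continuous (pdiv Y) := by
  have h1 : Continuous (fun z => fderiv ℝ Y z) := hY.continuous_fderiv one_ne_zero
  refine continuous_finset_sum _ fun i _ => ?_
  exact (continuous_apply i).comp <| h1.clm_apply continuous_const

lemma step_div {Y : (Fin (m+1) → ℝ) → (Fin (m+1) → ℝ)} (hY : ContDiff ℝ 1 Y)
    {R : ℝ} (hR : 0 < R) :
    (∫ z in Icc (fun _ => -R) (fun _ => R), pdiv Y z) =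
      ∑ i : Fin (m+1),
        ((∫ y in Icc (fun _ : Fin m => -R) (fun _ => R), Y (i.insertNth R y) i) -
          ∫ y in Icc (fun _ : Fin m => -R) (fun _ => R), Y (i.insertNth (-R) y) i) := by
  have hle : (fun _ : Fin (m+1) => -R) ≤ fun _ => R := fun i => by simp; linarith
  have := MeasureTheory.integral_divergence_of_hasFDerivAt_off_countable
    (fun _ => -R) (fun _ => R) hle Y (fun z => fderiv ℝ Y z) ∅ Set.countable_empty
    (hY.continuous.continuousOn)
    (fun x _ => (hY.differentiable one_ne_zero x).hasFDerivAt)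
    ((pdiv_cont hY).integrableOn_Icc)
  exact this

noncomputable def Kf (h : (Fin (m+1) → ℝ) → ℝ) (i : Fin (m+1)) (t : ℝ) : ℝ≥0∞ :=
  ∫⁻ y : Fin m → ℝ, ENNReal.ofReal (h (i.insertNth t y))

lemma face_le_K {h : (Fin (m+1) → ℝ) → ℝ} (hc : Continuous h) (h0 : ∀ z, 0 ≤ h z)
    {Y : (Fin (m+1) → ℝ) → (Fin (m+1) → ℝ)} (hY : ContDiff ℝ 1 Y)
    (hbound : ∀ z i, |Y z i| ≤ h z) (i : Fin (m+1)) (t R : ℝ) :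
    ENNReal.ofReal |∫ y in Icc (fun _ : Fin m => -R) (fun _ => R), Y (i.insertNth t y) i| ≤
      Kf h i t := by
  have hcy : Continuous fun y : Fin m → ℝ => Y (i.insertNth t y) i :=
    (continuous_apply i).comp (hY.continuous.comp (continuous_const.finInsertNth i continuous_id))
  have hch : Continuous fun y : Fin m → ℝ => h (i.insertNth t y) :=
    hc.comp (continuous_const.finInsertNth i continuous_id)
  have h1 : |∫ y in Icc (fun _ : Fin m => -R) (fun _ => R), Y (i.insertNth t y) i| ≤
      ∫ y in Icc (fun _ : Fin m => -R) (fun _ => R), h (i.insertNth t y) := by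
    rw [← Real.norm_eq_abs]
    refine (norm_integral_le_integral_norm _).trans ?_
    simp only [Real.norm_eq_abs]
    exact setIntegral_mono_on (hcy.abs.integrableOn_Icc) (hch.integrableOn_Icc)
      measurableSet_Icc fun y _ => hbound _ _
  refine (ENNReal.ofReal_le_ofReal h1).trans ?_
  rw [ofReal_integral_eq_lintegral_ofReal hch.integrableOn_Icc
    (Filter.Eventually.of_forall fun y => h0 _)]
  exact (setLIntegral_le_lintegral _ _)

lemma box_le_H {h : (Fin (m+1) → ℝ) → ℝ} (hc : Continuous h) (h0 : ∀ z, 0 ≤ h z)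
    {Y : (Fin (m+1) → ℝ) → (Fin (m+1) → ℝ)} (hY : ContDiff ℝ 1 Y)
    (hbound : ∀ z i, |Y z i| ≤ h z) (hd : ∀ z, pdiv Y z ≤ 0) {R : ℝ} (hR : 0 < R) :
    (∫⁻ z in Icc (fun _ : Fin (m+1) => -R) (fun _ => R), ENNReal.ofReal (-pdiv Y z)) ≤
      ∑ i : Fin (m+1), (Kf h i R + Kf h i (-R)) := by
  have hIcc : IntegrableOn (fun z => -(pdiv Y z)) (Icc (fun _ : Fin (m+1) => -R) (fun _ => R)) :=
    ((pdiv_cont hY).neg).integrableOn_Icc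
  rw [← ofReal_integral_eq_lintegral_ofReal hIcc
    (Filter.Eventually.of_forall fun z => neg_nonneg.2 (hd z))]
  rw [integral_neg, step_div hY hR, ← Finset.sum_neg_distrib]
  calc ENNReal.ofReal (∑ i : Fin (m+1),
        -((∫ y in Icc (fun _ : Fin m => -R) (fun _ => R), Y (i.insertNth R y) i) -
          ∫ y in Icc (fun _ : Fin m => -R) (fun _ => R), Y (i.insertNth (-R) y) i))
      ≤ ENNReal.ofReal (∑ i : Fin (m+1),
        (|∫ y in Icc (fun _ : Fin m => -R) (fun _ => R), Y (i.insertNth R y) i| +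
          |∫ y in Icc (fun _ : Fin m => -R) (fun _ => R), Y (i.insertNth (-R) y) i|)) := by
        refine ENNReal.ofReal_le_ofReal (Finset.sum_le_sum fun i _ => ?_)
        rw [neg_sub]
        have h1 := le_abs_self (∫ y in Icc (fun _ : Fin m => -R) (fun _ => R),
          Y (i.insertNth (-R) y) i)
        have h2 := neg_abs_le (∫ y in Icc (fun _ : Fin m => -R) (fun _ => R),
          Y (i.insertNth R y) i)
        linarith
    _ = ∑ i : Fin (m+1),
        (ENNReal.ofReal |∫ y in Icc (fun _ : Fin m => -R) (fun _ => R), Y (i.insertNth R y) i| +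
          ENNReal.ofReal
            |∫ y in Icc (fun _ : Fin m => -R) (fun _ => R), Y (i.insertNth (-R) y) i|) := by
        rw [ENNReal.ofReal_sum_of_nonneg fun i _ => by positivity]
        exact Finset.sum_congr rfl fun i _ =>
          ENNReal.ofReal_add (abs_nonneg _) (abs_nonneg _)
    _ ≤ ∑ i : Fin (m+1), (Kf h i R + Kf h i (-R)) :=
        Finset.sum_le_sum fun i _ =>
          add_le_add (face_le_K hc h0 hY hbound i R R) (face_le_K hc h0 hY hbound i (-R) R)

lemma K_meas {h : (Fin (m+1) → ℝ) → ℝ} (hc : Continuous h) (i : Fin (m+1)) :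
    Measurable (Kf h i) := by
  have : Measurable fun p : ℝ × (Fin m → ℝ) => ENNReal.ofReal (h (i.insertNth p.1 p.2)) :=
    ENNReal.measurable_ofReal.comp
      ((hc.comp (continuous_fst.finInsertNth i continuous_snd)).measurable)
  exact this.lintegral_prod_right'

lemma K_lintegral {h : (Fin (m+1) → ℝ) → ℝ} (hc : Continuous h) (i : Fin (m+1)) :
    (∫⁻ t : ℝ, Kf h i t) = ∫⁻ z : Fin (m+1) → ℝ, ENNReal.ofReal (h z) := by
  have mp := measurePreserving_piFinSuccAbove (fun _ : Fin (m+1) => (volume : Measure ℝ)) i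
  have hms : Measurable fun z : Fin (m+1) → ℝ => ENNReal.ofReal (h z) :=
    ENNReal.measurable_ofReal.comp hc.measurable
  set e := MeasurableEquiv.piFinSuccAbove (fun _ : Fin (m+1) => ℝ) i with he
  calc (∫⁻ t : ℝ, Kf h i t)
      = ∫⁻ p : ℝ × (Fin m → ℝ),
          ENNReal.ofReal (h (i.insertNth p.1 p.2)) ∂((volume : Measure ℝ).prod volume) := by
        have hp := lintegral_prod (μ := (volume : Measure ℝ)) (ν := (volume : Measure (Fin m → ℝ)))
          (fun p : ℝ × (Fin m → ℝ) => ENNReal.ofReal (h (i.insertNth p.1 p.2)))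
          ((ENNReal.measurable_ofReal.comp
            ((hc.comp (continuous_fst.finInsertNth i continuous_snd)).measurable)).aemeasurable)
        exact hp.symm
    _ = ∫⁻ p : ℝ × (Fin m → ℝ), ENNReal.ofReal (h (e.symm p))
          ∂((volume : Measure ℝ).prod volume) := by
        refine lintegral_congr fun p => rfl
    _ = ∫⁻ z : Fin (m+1) → ℝ, ENNReal.ofReal (h z) ∂(Measure.pi fun _ => volume) :=
        (mp.symm e).lintegral_comp hms
    _ = _ := rfl

noncomputable def Hf (h : (Fin (m+1) → ℝ) → ℝ) (t : ℝ) : ℝ≥0∞ :=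
  ∑ i : Fin (m+1), (Kf h i t + Kf h i (-t))

lemma H_meas {h : (Fin (m+1) → ℝ) → ℝ} (hc : Continuous h) : Measurable (Hf h) := by
  refine Finset.measurable_sum _ fun i _ => ((K_meas hc i).add ?_)
  exact (K_meas hc i).comp measurable_neg

lemma H_fin {h : (Fin (m+1) → ℝ) → ℝ} (hc : Continuous h) (h0 : ∀ z, 0 ≤ h z)
    (hh : Integrable h volume) : (∫⁻ t in Ioi (0:ℝ), Hf h t) ≠ ⊤ := by
  have hI0 : (∫⁻ z : Fin (m+1) → ℝ, ENNReal.ofReal (h z)) < ⊤ :=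
    (hasFiniteIntegral_iff_ofReal (Filter.Eventually.of_forall h0)).1 hh.2
  have hKneg : ∀ i : Fin (m+1), (∫⁻ t : ℝ, Kf h i (-t)) = ∫⁻ t : ℝ, Kf h i t := by
    intro i
    exact (Measure.measurePreserving_neg (volume : Measure ℝ)).lintegral_comp (K_meas hc i)
  have hsum : (∫⁻ t : ℝ, Hf h t) ≤
      ∑ i : Fin (m+1), ((∫⁻ z : Fin (m+1) → ℝ, ENNReal.ofReal (h z)) +
        ∫⁻ z : Fin (m+1) → ℝ, ENNReal.ofReal (h z)) := by
    unfold Hf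
    rw [lintegral_finset_sum (f := fun (i : Fin (m+1)) (t : ℝ) => Kf h i t + Kf h i (-t))
      Finset.univ (fun i _ => show Measurable fun t => Kf h i t + Kf h i (-t) from
        (K_meas hc i).add ((K_meas hc i).comp measurable_neg))]
    refine Finset.sum_le_sum fun i _ => ?_
    rw [lintegral_add_left (K_meas hc i), hKneg i, K_lintegral hc i]
  have hlt : (∑ _i : Fin (m+1), ((∫⁻ z : Fin (m+1) → ℝ, ENNReal.ofReal (h z)) +
      ∫⁻ z : Fin (m+1) → ℝ, ENNReal.ofReal (h z))) < ⊤ :=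
    ENNReal.sum_lt_top.2 fun i _ => ENNReal.add_lt_top.2 ⟨hI0, hI0⟩
  exact ne_of_lt (lt_of_le_of_lt ((setLIntegral_le_lintegral _ _).trans hsum) hlt)

lemma H_small {h : (Fin (m+1) → ℝ) → ℝ} (hc : Continuous h) (h0 : ∀ z, 0 ≤ h z)
    (hh : Integrable h volume) {ε : ℝ≥0∞} (hε : 0 < ε) (T : ℝ) :
    ∃ R, T < R ∧ 0 < R ∧ Hf h R < ε := by
  by_contra hcon
  push_neg at hcon
  have hge : ∀ R ∈ Ioi (max T 0), ε ≤ Hf h R := fun R hR =>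
    hcon R (lt_of_le_of_lt (le_max_left _ _) hR) (lt_of_le_of_lt (le_max_right _ _) hR)
  have h1 : (∫⁻ t in Ioi (max T 0), ε) ≤ ∫⁻ t in Ioi (max T 0), Hf h t :=
    setLIntegral_mono (H_meas hc) hge
  rw [setLIntegral_const, Real.volume_Ioi, ENNReal.mul_top hε.ne'] at h1
  have h2 : (∫⁻ t in Ioi (max T 0), Hf h t) ≤ ∫⁻ t in Ioi (0:ℝ), Hf h t :=
    lintegral_mono_set (Ioi_subset_Ioi (le_max_right _ _))
  exact H_fin hc h0 hh (top_le_iff.1 (h1.trans h2))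

theorem pdiv_eq_zero {Y : (Fin (m+1) → ℝ) → (Fin (m+1) → ℝ)} (hY : ContDiff ℝ 1 Y)
    {h : (Fin (m+1) → ℝ) → ℝ} (hc : Continuous h) (h0 : ∀ z, 0 ≤ h z)
    (hh : Integrable h volume) (hbound : ∀ z i, |Y z i| ≤ h z)
    (hd : ∀ z, pdiv Y z ≤ 0) : ∀ z, pdiv Y z = 0 := by
  have hFmeas : Measurable fun z => ENNReal.ofReal (-pdiv Y z) :=
    ENNReal.measurable_ofReal.comp (pdiv_cont hY).neg.measurable
  have key : ∀ T : ℝ, 0 < T →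
      (∫⁻ z in Icc (fun _ : Fin (m+1) => -T) (fun _ => T), ENNReal.ofReal (-pdiv Y z)) = 0 := by
    intro T hT
    by_contra hne
    obtain ⟨R, hTR, hR0, hHR⟩ := H_small hc h0 hh (pos_iff_ne_zero.2 hne) T
    have hsub : Icc (fun _ : Fin (m+1) => -T) (fun _ => T) ⊆
        Icc (fun _ : Fin (m+1) => -R) (fun _ => R) :=
      Icc_subset_Icc (fun i => by simp; linarith) (fun i => le_of_lt hTR)
    have hchain : (∫⁻ z in Icc (fun _ : Fin (m+1) => -T) (fun _ => T),
        ENNReal.ofReal (-pdiv Y z)) ≤ Hf h R :=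
      (lintegral_mono_set hsub).trans (box_le_H hc h0 hY hbound hd hR0)
    exact absurd (hchain.trans_lt hHR) (lt_irrefl _)
  have hnonneg : ∀ z, 0 ≤ pdiv Y z := by
    intro z₀
    by_contra hneg
    push_neg at hneg
    set c := -pdiv Y z₀ with hc'
    have hcpos : 0 < c := by simp [hc']; linarith
    have hcont : Continuous fun z => -pdiv Y z := (pdiv_cont hY).neg
    have : ∀ᶠ z in nhds z₀, c / 2 < -pdiv Y z :=
      hcont.continuousAt.eventually_const_lt (by linarith)
    obtain ⟨δ, hδ, hball⟩ := Metric.eventually_nhds_iff_ball.1 this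
    set T := ‖z₀‖ + δ + 1 with hT'
    have hTpos : 0 < T := by positivity
    have hsub : Metric.ball z₀ δ ⊆ Icc (fun _ : Fin (m+1) => -T) (fun _ => T) := by
      intro z hz
      have hz' : ‖z‖ ≤ ‖z₀‖ + δ := by
        have := norm_sub_norm_le z z₀
        rw [Metric.mem_ball, dist_eq_norm] at hz
        linarith
      constructor <;> intro i <;>
        have hzi : |z i| ≤ ‖z‖ := by
          simpa using norm_le_pi_norm z i
      · have : -(‖z₀‖ + δ) ≤ z i := by
          rw [abs_le] at hzi; linarith
        simpa [hT'] using by linarith [this]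
      · have : z i ≤ ‖z₀‖ + δ := by rw [abs_le] at hzi; linarith
        simpa [hT'] using by linarith [this]
    have hlow : ENNReal.ofReal (c / 2) * volume (Metric.ball z₀ δ) ≤
        ∫⁻ z in Icc (fun _ : Fin (m+1) => -T) (fun _ => T), ENNReal.ofReal (-pdiv Y z) := by
      rw [← setLIntegral_const]
      refine le_trans (setLIntegral_mono hFmeas fun z hz =>
        ENNReal.ofReal_le_ofReal (le_of_lt (hball z hz))) (lintegral_mono_set hsub)
    rw [key T hTpos] at hlow
    have hbp : 0 < volume (Metric.ball z₀ δ) := Metric.measure_ball_pos _ _ hδ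
    have : (0:ℝ≥0∞) < ENNReal.ofReal (c / 2) * volume (Metric.ball z₀ δ) :=
      ENNReal.mul_pos (by simp [ENNReal.ofReal_pos]; linarith) hbp.ne'
    exact absurd (this.trans_le hlow) (lt_irrefl _)
  exact fun z => le_antisymm (hd z) (hnonneg z)

theorem div_nonpos_integrable_eq_zero (n : ℕ)
    (X : EuclideanSpace ℝ (Fin n) → EuclideanSpace ℝ (Fin n))
    (hX : ContDiff ℝ 1 X)
    (hint : Integrable (fun x => ‖X x‖) volume)
    (b : Fin n → EuclideanSpace ℝ (Fin n))
    (hb : b = fun i => EuclideanSpace.basisFun (Fin n) ℝ i)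
    (hdiv : ∀ x, ∑ i, ⟪fderiv ℝ X x (b i), b i⟫ ≤ 0) :
    ∀ x, ∑ i, ⟪fderiv ℝ X x (b i), b i⟫ = 0 := by
  obtain _ | m := n
  · intro x; simp
  set e : EuclideanSpace ℝ (Fin (m+1)) ≃L[ℝ] (Fin (m+1) → ℝ) :=
    PiLp.continuousLinearEquiv 2 ℝ _ with he
  set Y : (Fin (m+1) → ℝ) → (Fin (m+1) → ℝ) := fun z => e (X (e.symm z)) with hY
  have hXd : Differentiable ℝ X := hX.differentiable one_ne_zero
  have hYc : ContDiff ℝ 1 Y := e.contDiff.comp (hX.comp e.symm.contDiff)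
  have hbsingle : ∀ i, b i = (e.symm : (Fin (m+1) → ℝ) → EuclideanSpace ℝ (Fin (m+1)))
      (Pi.single i 1) := by
    intro i
    rw [hb]
    simp only [EuclideanSpace.basisFun_apply]
    rfl
  have key : ∀ x : EuclideanSpace ℝ (Fin (m+1)),
      pdiv Y (e x) = ∑ i, ⟪fderiv ℝ X x (b i), b i⟫ := by
    intro x
    have h1 : HasFDerivAt (fun z : Fin (m+1) → ℝ => X (e.symm z))
        ((fderiv ℝ X x).comp (e.symm : (Fin (m+1) → ℝ) →L[ℝ] EuclideanSpace ℝ (Fin (m+1))))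
        (e x) := by
      refine HasFDerivAt.comp _ ?_ e.symm.hasFDerivAt
      simpa using (hXd (e.symm (e x))).hasFDerivAt
    have h2 : HasFDerivAt Y
        ((e : EuclideanSpace ℝ (Fin (m+1)) →L[ℝ] (Fin (m+1) → ℝ)).comp
          ((fderiv ℝ X x).comp
            (e.symm : (Fin (m+1) → ℝ) →L[ℝ] EuclideanSpace ℝ (Fin (m+1))))) (e x) :=
      e.hasFDerivAt.comp _ h1
    rw [show pdiv Y (e x) = ∑ i, fderiv ℝ Y (e x) (Pi.single i 1) i from rfl, h2.fderiv]
    refine Finset.sum_congr rfl fun i _ => ?_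
    rw [ContinuousLinearMap.comp_apply, ContinuousLinearMap.comp_apply]
    have hcoord : (e : EuclideanSpace ℝ (Fin (m+1)) →L[ℝ] (Fin (m+1) → ℝ))
        ((fderiv ℝ X x) ((e.symm : (Fin (m+1) → ℝ) →L[ℝ] EuclideanSpace ℝ (Fin (m+1)))
          (Pi.single i 1))) i = fderiv ℝ X x (b i) i := by
      rw [hbsingle i]; rfl
    rw [hcoord, hb]
    simp only [EuclideanSpace.basisFun_apply, EuclideanSpace.inner_single_right]
    simp
  have hc : Continuous fun z : Fin (m+1) → ℝ => ‖X (e.symm z)‖ :=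
    (hX.continuous.comp e.symm.continuous).norm
  have h0 : ∀ z : Fin (m+1) → ℝ, 0 ≤ ‖X (e.symm z)‖ := fun z => norm_nonneg _
  have hh : Integrable (fun z : Fin (m+1) → ℝ => ‖X (e.symm z)‖) volume := by
    have mp := (EuclideanSpace.volume_preserving_symm_measurableEquiv_toLp (Fin (m+1))).symm
    have := (mp.integrable_comp_emb
      (MeasurableEquiv.measurableEmbedding _)).2 hint
    exact this
  have hbound : ∀ (z : Fin (m+1) → ℝ) (i : Fin (m+1)), |Y z i| ≤ ‖X (e.symm z)‖ := by
    intro z i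
    have h1 : |Y z i| = |⟪X (e.symm z), EuclideanSpace.single i (1:ℝ)⟫| := by
      rw [EuclideanSpace.inner_single_right]; simp; rfl
    calc |Y z i| = |⟪X (e.symm z), EuclideanSpace.single i (1:ℝ)⟫| := h1
      _ ≤ ‖X (e.symm z)‖ * ‖EuclideanSpace.single i (1:ℝ)‖ := abs_real_inner_le_norm _ _
      _ = ‖X (e.symm z)‖ := by simp
  have hd : ∀ z, pdiv Y z ≤ 0 := by
    intro z
    have hk := key (e.symm z)
    rw [e.apply_symm_apply] at hk
    rw [hk]
    exact hdiv _
  intro x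
  rw [← key x]
  exact pdiv_eq_zero hYc hc h0 hh hbound hd (e x)
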